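/- Under the MIMO discrete-time adaptive law setup, the parameter estimates are uniformly bounded and the normalized estimation error is square-summable and uniformly bounded: sup_{t ∈ ℕ} ‖Θ(t)‖ < ∞, sup_{t ∈ ℕ} ‖Ψ(t)‖ < ∞, ∑_{t=0}^{∞} ‖ε(t)‖²/m(t)² < ∞, and sup_{t ∈ ℕ} ‖ε(t)‖/m(t) < ∞ (i.e. Θ ∈ L^∞, Ψ ∈ L^∞, and ε/m ∈ L² ∩ L^∞). -/

import Mathlib

open Matrix BigOperators

lemma adaptive_quad_lower {M : ℕ} (hM : 0 < M) (Q : Matrix (Fin M) (Fin M) ℝ)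
    (hQ : ∀ x : Fin M → ℝ, x ≠ 0 → 0 < x ⬝ᵥ Q.mulVec x) :
    ∃ c > 0, ∀ x : Fin M → ℝ, c * (x ⬝ᵥ x) ≤ x ⬝ᵥ Q.mulVec x := by
  haveI : Nonempty (Fin M) := ⟨⟨0, hM⟩⟩
  have hcont : Continuous fun x : Fin M → ℝ => x ⬝ᵥ Q.mulVec x := by
    simp only [dotProduct, Matrix.mulVec]
    exact continuous_finset_sum _ fun i _ => (continuous_apply i).mul
      (continuous_finset_sum _ fun j _ => continuous_const.mul (continuous_apply j))
  have hne : (Metric.sphere (0 : Fin M → ℝ) 1).Nonempty :=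
    NormedSpace.sphere_nonempty.mpr zero_le_one
  obtain ⟨x₀, hx₀s, hmin⟩ := (isCompact_sphere (0 : Fin M → ℝ) 1).exists_isMinOn hne
    hcont.continuousOn
  have hx₀norm : ‖x₀‖ = 1 := by simpa using hx₀s
  have hx₀ne : x₀ ≠ 0 := by
    intro h; rw [h] at hx₀norm; simp at hx₀norm
  set c := x₀ ⬝ᵥ Q.mulVec x₀ with hc
  have hcpos : 0 < c := hQ x₀ hx₀ne
  refine ⟨c / M, by positivity, fun x => ?_⟩
  by_cases hx : x = 0
  · simp [hx]
  · have hxn : 0 < ‖x‖ := norm_pos_iff.mpr hx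
    set y : Fin M → ℝ := ‖x‖⁻¹ • x with hy
    have hys : y ∈ Metric.sphere (0 : Fin M → ℝ) 1 := by
      simp [hy, norm_smul, abs_of_pos (inv_pos.mpr hxn), inv_mul_cancel₀ hxn.ne']
    have hmin' : c ≤ y ⬝ᵥ Q.mulVec y := hmin hys
    have hscale : y ⬝ᵥ Q.mulVec y = (‖x‖⁻¹)^2 * (x ⬝ᵥ Q.mulVec x) := by
      simp [hy, Matrix.mulVec_smul, smul_dotProduct, dotProduct_smul, smul_eq_mul]
      ring
    have h1 : c * ‖x‖^2 ≤ x ⬝ᵥ Q.mulVec x := by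
      rw [hscale] at hmin'
      have := mul_le_mul_of_nonneg_left hmin' (le_of_lt (by positivity : (0:ℝ) < ‖x‖^2))
      calc c * ‖x‖^2 = ‖x‖^2 * c := by ring
        _ ≤ ‖x‖^2 * ((‖x‖⁻¹)^2 * (x ⬝ᵥ Q.mulVec x)) := this
        _ = x ⬝ᵥ Q.mulVec x := by
            field_simp
    have h2 : x ⬝ᵥ x ≤ M * ‖x‖^2 := by
      have : ∀ i, x i * x i ≤ ‖x‖^2 := fun i => by
        have h := norm_le_pi_norm x i
        have : |x i| ≤ ‖x‖ := by simpa using h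
        nlinarith [abs_nonneg (x i), norm_nonneg x, sq_abs (x i)]
      calc x ⬝ᵥ x = ∑ i, x i * x i := rfl
        _ ≤ ∑ _i : Fin M, ‖x‖^2 := Finset.sum_le_sum fun i _ => this i
        _ = M * ‖x‖^2 := by simp [Finset.sum_const]
    calc c / M * (x ⬝ᵥ x) ≤ c / M * (M * ‖x‖^2) := by
          apply mul_le_mul_of_nonneg_left h2 (by positivity)
      _ = c * ‖x‖^2 := by field_simp
      _ ≤ x ⬝ᵥ Q.mulVec x := h1

lemma adaptive_qf_sub {M : ℕ} (P : Matrix (Fin M) (Fin M) ℝ) (x u : Fin M → ℝ) (a : ℝ) :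
    (x - a • u) ⬝ᵥ P.mulVec (x - a • u) =
      x ⬝ᵥ P.mulVec x - a * (x ⬝ᵥ P.mulVec u) - a * (u ⬝ᵥ P.mulVec x)
        + a^2 * (u ⬝ᵥ P.mulVec u) := by
  simp only [Matrix.mulVec_sub, Matrix.mulVec_smul, sub_dotProduct, dotProduct_sub,
    smul_dotProduct, dotProduct_smul, smul_eq_mul]
  ring

lemma adaptive_dot_mulVec_sum {M N : ℕ} (u : Fin M → ℝ) (P : Matrix (Fin M) (Fin M) ℝ)
    (g : Fin N → Fin M → ℝ) (c : Fin N → ℝ) :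
    ∑ k, c k * (u ⬝ᵥ P.mulVec (g k)) = u ⬝ᵥ P.mulVec (fun i => ∑ k, c k * g k i) := by
  simp only [dotProduct, Matrix.mulVec, Finset.mul_sum]
  rw [Finset.sum_comm]
  apply Finset.sum_congr rfl; intro i _
  rw [Finset.sum_comm]
  apply Finset.sum_congr rfl; intro j _
  apply Finset.sum_congr rfl; intro k _
  ring

lemma adaptive_dot_transfer {M : ℕ} (A P : Matrix (Fin M) (Fin M) ℝ) (e z : Fin M → ℝ) :
    (A *ᵥ e) ⬝ᵥ (P *ᵥ z) = e ⬝ᵥ ((Aᵀ * P) *ᵥ z) := by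
  rw [show e ⬝ᵥ ((Aᵀ * P) *ᵥ z) = e ⬝ᵥ Aᵀ *ᵥ (P *ᵥ z) by rw [Matrix.mulVec_mulVec],
    Matrix.dotProduct_mulVec e, Matrix.vecMul_transpose]

lemma adaptive_dot_symm {M : ℕ} (P : Matrix (Fin M) (Fin M) ℝ) (hP : Pᵀ = P)
    (x z : Fin M → ℝ) : x ⬝ᵥ P *ᵥ z = z ⬝ᵥ P *ᵥ x := by
  rw [Matrix.dotProduct_mulVec]
  nth_rewrite 1 [← hP]
  rw [Matrix.vecMul_transpose, dotProduct_comm]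

set_option maxHeartbeats 1000000 in
/-- MIMO discrete-time adaptive laws (Lemma 3.1, discrete-time case):
`Θ` and `Ψ` are uniformly bounded (Frobenius norm), and the normalized
estimation error `ε/m` is square-summable and uniformly bounded. -/
theorem mimo_discrete_adaptive_law_boundedness_and_L2
    (N M : ℕ) (hN : 0 < N) (hM : 0 < M)
    (ζ : ℕ → Fin N → ℝ) (ξ : ℕ → Fin M → ℝ)
    (m : ℕ → ℝ)
    (hm : ∀ t, m t = Real.sqrt (1 + (∑ i, ζ t i * ζ t i) + ∑ j, ξ t j * ξ t j))
    (Kp Sp : Matrix (Fin M) (Fin M) ℝ) (hSp : IsUnit Sp.det)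
    (hKS : (Kp * Sp).PosDef)
    (hKS2 : ∀ x : Fin M → ℝ, x ≠ 0 →
      (∑ i, x i * ((Kp * Sp).mulVec x) i) < 2 * ∑ i, x i * x i)
    (Γ : Matrix (Fin M) (Fin M) ℝ) (hΓ : Γ.PosDef)
    (hΓ2 : ∀ x : Fin M → ℝ, x ≠ 0 →
      (∑ i, x i * (Γ.mulVec x) i) < 2 * ∑ i, x i * x i)
    (Θs : Matrix (Fin N) (Fin M) ℝ)
    (Θ : ℕ → Matrix (Fin N) (Fin M) ℝ) (Ψ : ℕ → Matrix (Fin M) (Fin M) ℝ)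
    (ε : ℕ → Fin M → ℝ)
    (hε : ∀ t, ε t = Kp.mulVec ((Θ t - Θs)ᵀ.mulVec (ζ t)) + (Ψ t - Kp).mulVec (ξ t))
    (hΘlaw : ∀ t, (Θ (t + 1))ᵀ =
      (Θ t)ᵀ - (m t ^ 2)⁻¹ • Matrix.vecMulVec (Sp.mulVec (ε t)) (ζ t))
    (hΨlaw : ∀ t, Ψ (t + 1) =
      Ψ t - (m t ^ 2)⁻¹ • Matrix.vecMulVec (Γ.mulVec (ε t)) (ξ t)) :
    (∃ C : ℝ, ∀ t, Real.sqrt (∑ i, ∑ j, (Θ t i j) ^ 2) ≤ C) ∧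
    (∃ C : ℝ, ∀ t, Real.sqrt (∑ i, ∑ j, (Ψ t i j) ^ 2) ≤ C) ∧
    Summable (fun t => (∑ j, ε t j * ε t j) / m t ^ 2) ∧
    (∃ C : ℝ, ∀ t, Real.sqrt (∑ j, ε t j * ε t j) / m t ≤ C) := by
  classical
  -- basic positivity facts about m
  have hdnn : ∀ {n : ℕ} (v : Fin n → ℝ), 0 ≤ v ⬝ᵥ v := fun v =>
    Finset.sum_nonneg fun i _ => mul_self_nonneg _
  have hmsq : ∀ t, m t ^ 2 = 1 + (ζ t ⬝ᵥ ζ t) + (ξ t ⬝ᵥ ξ t) := by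
    intro t
    rw [hm t, Real.sq_sqrt]
    · rfl
    · have h1 := hdnn (ζ t); have h2 := hdnn (ξ t)
      simp only [dotProduct] at h1 h2
      linarith
  have hmpos : ∀ t, 0 < m t ^ 2 := by
    intro t; rw [hmsq t]
    have h1 := hdnn (ζ t); have h2 := hdnn (ξ t); linarith
  have hm1 : ∀ t, 1 ≤ m t ^ 2 := by
    intro t; rw [hmsq t]
    have h1 := hdnn (ζ t); have h2 := hdnn (ξ t); linarith
  have hmppos : ∀ t, 0 < m t := by
    intro t
    have h0 : 0 ≤ m t := by rw [hm t]; exact Real.sqrt_nonneg _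
    have h2 := hmpos t
    rcases eq_or_lt_of_le h0 with h | h
    · rw [← h] at h2; norm_num at h2
    · exact h
  -- Sp inverse facts
  have hSp1 : Sp⁻¹ * Sp = 1 := Matrix.nonsing_inv_mul Sp hSp
  have hSp2 : Sp * Sp⁻¹ = 1 := Matrix.mul_nonsing_inv Sp hSp
  set M₁ : Matrix (Fin M) (Fin M) ℝ := Sp⁻¹ᵀ * Kp with hM₁def
  have key1 : Spᵀ * M₁ = Kp := by
    rw [hM₁def, ← Matrix.mul_assoc, ← Matrix.transpose_mul, hSp1, Matrix.transpose_one,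
      Matrix.one_mul]
  have hherm : Spᵀ * Kpᵀ = Kp * Sp := by
    have := hKS.1
    rw [Matrix.IsHermitian, Matrix.conjTranspose_mul] at this
    simpa using this
  have hsym : M₁ᵀ = M₁ := by
    rw [hM₁def, Matrix.transpose_mul, Matrix.transpose_transpose]
    have : Kpᵀ = Sp⁻¹ᵀ * (Kp * Sp) := by
      calc Kpᵀ = (Sp⁻¹ᵀ * Spᵀ) * Kpᵀ := by
            rw [← Matrix.transpose_mul, hSp2, Matrix.transpose_one, Matrix.one_mul]
        _ = Sp⁻¹ᵀ * (Kp * Sp) := by rw [Matrix.mul_assoc, hherm]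
    rw [this, Matrix.mul_assoc, Matrix.mul_assoc, hSp2, Matrix.mul_one]
  have hM₁pos : ∀ x : Fin M → ℝ, x ≠ 0 → 0 < x ⬝ᵥ M₁.mulVec x := by
    intro x hx
    set y := Sp⁻¹.mulVec x with hy
    have hxy : x = Sp.mulVec y := by
      rw [hy, Matrix.mulVec_mulVec, hSp2, Matrix.one_mulVec]
    have hyne : y ≠ 0 := by
      intro h; apply hx; rw [hxy, h, Matrix.mulVec_zero]
    have hpos : 0 < y ⬝ᵥ (Kp * Sp).mulVec y := by simpa using hKS.dotProduct_mulVec_pos hyne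
    have : x ⬝ᵥ M₁.mulVec x = y ⬝ᵥ (Kp * Sp).mulVec y := by
      rw [hxy, adaptive_dot_transfer, key1, Matrix.mulVec_mulVec]
    rw [this]; exact hpos
  -- Γ facts
  have hΓdet : IsUnit Γ.det := isUnit_iff_ne_zero.mpr hΓ.det_pos.ne'
  have hΓ1 : Γ * Γ⁻¹ = 1 := Matrix.mul_nonsing_inv Γ hΓdet
  have hΓT : Γᵀ = Γ := by
    have := hΓ.1
    rw [Matrix.IsHermitian] at this
    simpa using this
  have hΓinvT : (Γ⁻¹)ᵀ = Γ⁻¹ := by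
    rw [Matrix.transpose_nonsing_inv, hΓT]
  have keyΓ : Γᵀ * Γ⁻¹ = 1 := by rw [hΓT, hΓ1]
  have hΓinvpos : ∀ x : Fin M → ℝ, x ≠ 0 → 0 < x ⬝ᵥ (Γ⁻¹).mulVec x := by
    intro x hx
    have := (hΓ.inv).dotProduct_mulVec_pos hx
    simpa using this
  -- quadratic form bounds
  obtain ⟨c₁, hc₁, hlow₁⟩ := adaptive_quad_lower hM M₁ hM₁pos
  obtain ⟨c₂, hc₂, hlow₂⟩ := adaptive_quad_lower hM Γ⁻¹ hΓinvpos
  -- upper bounds: 2•1 - P positive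
  have huppos : ∀ (P : Matrix (Fin M) (Fin M) ℝ),
      (∀ x : Fin M → ℝ, x ≠ 0 → (∑ i, x i * (P.mulVec x) i) < 2 * ∑ i, x i * x i) →
      ∃ lam : ℝ, lam < 2 ∧ ∀ x : Fin M → ℝ, x ⬝ᵥ P.mulVec x ≤ lam * (x ⬝ᵥ x) := by
    intro P hP
    obtain ⟨c, hc, hlow⟩ := adaptive_quad_lower hM ((2:ℝ) • (1 : Matrix (Fin M) (Fin M) ℝ) - P)
      (by
        intro x hx
        have h := hP x hx
        have hmv : ((2:ℝ) • (1 : Matrix (Fin M) (Fin M) ℝ) - P).mulVec x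
            = (2:ℝ) • x - P.mulVec x := by
          rw [Matrix.sub_mulVec, Matrix.smul_mulVec, Matrix.one_mulVec]
        rw [hmv, dotProduct_sub, dotProduct_smul, smul_eq_mul]
        have h1 : x ⬝ᵥ P.mulVec x = ∑ i, x i * (P.mulVec x) i := rfl
        have h2 : x ⬝ᵥ x = ∑ i, x i * x i := rfl
        rw [h1, h2]; linarith)
    refine ⟨2 - c, by linarith, fun x => ?_⟩
    have := hlow x
    have hmv : ((2:ℝ) • (1 : Matrix (Fin M) (Fin M) ℝ) - P).mulVec x
        = (2:ℝ) • x - P.mulVec x := by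
      rw [Matrix.sub_mulVec, Matrix.smul_mulVec, Matrix.one_mulVec]
    rw [hmv, dotProduct_sub, dotProduct_smul, smul_eq_mul] at this
    linarith
  obtain ⟨lam₁, hlam₁, hup₁⟩ := huppos (Kp * Sp) hKS2
  obtain ⟨lam₂, hlam₂, hup₂⟩ := huppos Γ hΓ2
  set lam : ℝ := max (max lam₁ lam₂) 0 with hlamdef
  have hlamlt : lam < 2 := by
    rw [hlamdef]
    exact max_lt (max_lt hlam₁ hlam₂) (by norm_num)
  have hlam0 : 0 ≤ lam := le_max_right _ _
  have hlam₁' : lam₁ ≤ lam := le_trans (le_max_left _ _) (le_max_left _ _)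
  have hlam₂' : lam₂ ≤ lam := le_trans (le_max_right _ _) (le_max_left _ _)
  -- the parameter error vectors
  set θv : ℕ → Fin N → Fin M → ℝ := fun t k i => Θ t k i - Θs k i with hθv
  set ψv : ℕ → Fin M → Fin M → ℝ := fun t j i => Ψ t i j - Kp i j with hψv
  set V : ℕ → ℝ := fun t =>
    (∑ k, θv t k ⬝ᵥ M₁.mulVec (θv t k)) + ∑ j, ψv t j ⬝ᵥ (Γ⁻¹).mulVec (ψv t j) with hV
  set u : ℕ → Fin M → ℝ := fun t => Sp.mulVec (ε t) with hu
  set v : ℕ → Fin M → ℝ := fun t => Γ.mulVec (ε t) with hv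
  -- step laws for the error vectors
  have hθstep : ∀ t k, θv (t+1) k = θv t k - ((m t ^ 2)⁻¹ * ζ t k) • u t := by
    intro t k
    funext i
    have h := congrFun (congrFun (hΘlaw t) i) k
    simp only [Matrix.transpose_apply, Matrix.sub_apply, Matrix.smul_apply,
      Matrix.vecMulVec_apply, smul_eq_mul] at h
    simp only [hθv, Pi.sub_apply, Pi.smul_apply, smul_eq_mul, hu]
    rw [h]; ring
  have hψstep : ∀ t j, ψv (t+1) j = ψv t j - ((m t ^ 2)⁻¹ * ξ t j) • v t := by
    intro t j
    funext i
    have h := congrFun (congrFun (hΨlaw t) i) j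
    simp only [Matrix.sub_apply, Matrix.smul_apply, Matrix.vecMulVec_apply, smul_eq_mul] at h
    simp only [hψv, Pi.sub_apply, Pi.smul_apply, smul_eq_mul, hv]
    rw [h]; ring
  -- the ε decomposition
  have hεdec : ∀ t, ε t = Kp.mulVec (fun i => ∑ k, ζ t k * θv t k i)
      + (fun i => ∑ j, ξ t j * ψv t j i) := by
    intro t
    rw [hε t]
    have h1 : (Θ t - Θs)ᵀ.mulVec (ζ t) = (fun i => ∑ k, ζ t k * θv t k i) := by
      funext i
      simp only [Matrix.mulVec, dotProduct, Matrix.transpose_apply, Matrix.sub_apply, hθv]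
      exact Finset.sum_congr rfl fun k _ => by ring
    have h2 : (Ψ t - Kp).mulVec (ξ t) = (fun i => ∑ j, ξ t j * ψv t j i) := by
      funext i
      simp only [Matrix.mulVec, dotProduct, Matrix.sub_apply, hψv]
      exact Finset.sum_congr rfl fun j _ => by ring
    rw [h1, h2]
  -- main recursion for V
  have hVrec : ∀ t, V (t+1) = V t - 2 * (m t ^ 2)⁻¹ * (ε t ⬝ᵥ ε t)
      + ((m t ^ 2)⁻¹)^2 * ((ζ t ⬝ᵥ ζ t) * (ε t ⬝ᵥ (Kp * Sp).mulVec (ε t))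
        + (ξ t ⬝ᵥ ξ t) * (ε t ⬝ᵥ Γ.mulVec (ε t))) := by
    intro t
    set E := (m t ^ 2)⁻¹ with hE
    -- expand the Θ part
    have hTexp : ∀ k, θv (t+1) k ⬝ᵥ M₁.mulVec (θv (t+1) k)
        = θv t k ⬝ᵥ M₁.mulVec (θv t k)
          - 2 * (E * ζ t k * (u t ⬝ᵥ M₁.mulVec (θv t k)))
          + E^2 * (ζ t k * ζ t k) * (u t ⬝ᵥ M₁.mulVec (u t)) := by
      intro k
      rw [hθstep t k, adaptive_qf_sub, adaptive_dot_symm M₁ hsym (θv t k) (u t)]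
      ring
    have hPexp : ∀ j, ψv (t+1) j ⬝ᵥ (Γ⁻¹).mulVec (ψv (t+1) j)
        = ψv t j ⬝ᵥ (Γ⁻¹).mulVec (ψv t j)
          - 2 * (E * ξ t j * (v t ⬝ᵥ (Γ⁻¹).mulVec (ψv t j)))
          + E^2 * (ξ t j * ξ t j) * (v t ⬝ᵥ (Γ⁻¹).mulVec (v t)) := by
      intro j
      rw [hψstep t j, adaptive_qf_sub, adaptive_dot_symm Γ⁻¹ hΓinvT (ψv t j) (v t)]
      ring
    -- the cross terms
    have hcross1 : ∑ k, ζ t k * (u t ⬝ᵥ M₁.mulVec (θv t k))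
        = ε t ⬝ᵥ Kp.mulVec (fun i => ∑ k, ζ t k * θv t k i) := by
      rw [adaptive_dot_mulVec_sum]
      simp only [hu]
      rw [adaptive_dot_transfer, key1]
    have hcross2 : ∑ j, ξ t j * (v t ⬝ᵥ (Γ⁻¹).mulVec (ψv t j))
        = ε t ⬝ᵥ (fun i => ∑ j, ξ t j * ψv t j i) := by
      rw [adaptive_dot_mulVec_sum]
      simp only [hv]
      rw [adaptive_dot_transfer, keyΓ, Matrix.one_mulVec]
    have hquad1 : u t ⬝ᵥ M₁.mulVec (u t) = ε t ⬝ᵥ (Kp * Sp).mulVec (ε t) := by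
      simp only [hu]
      rw [adaptive_dot_transfer, key1, Matrix.mulVec_mulVec]
    have hquad2 : v t ⬝ᵥ (Γ⁻¹).mulVec (v t) = ε t ⬝ᵥ Γ.mulVec (ε t) := by
      simp only [hv]
      rw [adaptive_dot_transfer, keyΓ, Matrix.one_mulVec]
    have hεsum : ε t ⬝ᵥ Kp.mulVec (fun i => ∑ k, ζ t k * θv t k i)
        + ε t ⬝ᵥ (fun i => ∑ j, ξ t j * ψv t j i) = ε t ⬝ᵥ ε t := by
      have h := congrArg (fun z => ε t ⬝ᵥ z) (hεdec t)
      simp only [dotProduct_add] at h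
      exact h.symm
    have hTsum : ∑ k, θv (t+1) k ⬝ᵥ M₁.mulVec (θv (t+1) k)
        = (∑ k, θv t k ⬝ᵥ M₁.mulVec (θv t k))
          - 2 * E * (ε t ⬝ᵥ Kp.mulVec (fun i => ∑ k, ζ t k * θv t k i))
          + E^2 * (ζ t ⬝ᵥ ζ t) * (ε t ⬝ᵥ (Kp * Sp).mulVec (ε t)) := by
      rw [Finset.sum_congr rfl (fun k _ => hTexp k)]
      rw [Finset.sum_add_distrib, Finset.sum_sub_distrib]
      congr 1
      · congr 1
        rw [← hcross1, Finset.mul_sum]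
        exact Finset.sum_congr rfl fun k _ => by ring
      · rw [← hquad1,
          show ζ t ⬝ᵥ ζ t = ∑ k, ζ t k * ζ t k from rfl, Finset.mul_sum, Finset.sum_mul]
    have hPsum : ∑ j, ψv (t+1) j ⬝ᵥ (Γ⁻¹).mulVec (ψv (t+1) j)
        = (∑ j, ψv t j ⬝ᵥ (Γ⁻¹).mulVec (ψv t j))
          - 2 * E * (ε t ⬝ᵥ (fun i => ∑ j, ξ t j * ψv t j i))
          + E^2 * (ξ t ⬝ᵥ ξ t) * (ε t ⬝ᵥ Γ.mulVec (ε t)) := by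
      rw [Finset.sum_congr rfl (fun j _ => hPexp j)]
      rw [Finset.sum_add_distrib, Finset.sum_sub_distrib]
      congr 1
      · congr 1
        rw [← hcross2, Finset.mul_sum]
        exact Finset.sum_congr rfl fun j _ => by ring
      · rw [← hquad2,
          show ξ t ⬝ᵥ ξ t = ∑ j, ξ t j * ξ t j from rfl, Finset.mul_sum, Finset.sum_mul]
    have : V (t+1) = (∑ k, θv (t+1) k ⬝ᵥ M₁.mulVec (θv (t+1) k))
        + ∑ j, ψv (t+1) j ⬝ᵥ (Γ⁻¹).mulVec (ψv (t+1) j) := rfl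
    rw [this, hTsum, hPsum]
    have : V t = (∑ k, θv t k ⬝ᵥ M₁.mulVec (θv t k))
        + ∑ j, ψv t j ⬝ᵥ (Γ⁻¹).mulVec (ψv t j) := rfl
    rw [this]
    linear_combination (-2 * E) * hεsum
  -- one-step inequality
  have hstep : ∀ t, V (t+1) ≤ V t - (2 - lam) * ((m t ^ 2)⁻¹ * (ε t ⬝ᵥ ε t)) := by
    intro t
    rw [hVrec t]
    set E := (m t ^ 2)⁻¹ with hE
    have hE0 : 0 < E := inv_pos.mpr (hmpos t)
    have hs0 : 0 ≤ ε t ⬝ᵥ ε t := hdnn _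
    have ha0 : 0 ≤ ζ t ⬝ᵥ ζ t := hdnn _
    have hb0 : 0 ≤ ξ t ⬝ᵥ ξ t := hdnn _
    have hEab : E * ((ζ t ⬝ᵥ ζ t) + (ξ t ⬝ᵥ ξ t)) ≤ 1 := by
      have h1 : (ζ t ⬝ᵥ ζ t) + (ξ t ⬝ᵥ ξ t) ≤ m t ^ 2 := by
        rw [hmsq t]; linarith
      calc E * ((ζ t ⬝ᵥ ζ t) + (ξ t ⬝ᵥ ξ t)) ≤ E * m t ^ 2 :=
            mul_le_mul_of_nonneg_left h1 hE0.le
        _ = 1 := inv_mul_cancel₀ (hmpos t).ne'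
    have hp₁ : ε t ⬝ᵥ (Kp * Sp).mulVec (ε t) ≤ lam * (ε t ⬝ᵥ ε t) :=
      le_trans (hup₁ (ε t)) (mul_le_mul_of_nonneg_right hlam₁' hs0)
    have hp₂ : ε t ⬝ᵥ Γ.mulVec (ε t) ≤ lam * (ε t ⬝ᵥ ε t) :=
      le_trans (hup₂ (ε t)) (mul_le_mul_of_nonneg_right hlam₂' hs0)
    have hkey : E^2 * ((ζ t ⬝ᵥ ζ t) * (ε t ⬝ᵥ (Kp * Sp).mulVec (ε t))
        + (ξ t ⬝ᵥ ξ t) * (ε t ⬝ᵥ Γ.mulVec (ε t))) ≤ lam * (E * (ε t ⬝ᵥ ε t)) := by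
      have h1 : (ζ t ⬝ᵥ ζ t) * (ε t ⬝ᵥ (Kp * Sp).mulVec (ε t))
          + (ξ t ⬝ᵥ ξ t) * (ε t ⬝ᵥ Γ.mulVec (ε t))
          ≤ ((ζ t ⬝ᵥ ζ t) + (ξ t ⬝ᵥ ξ t)) * (lam * (ε t ⬝ᵥ ε t)) := by
        have := mul_le_mul_of_nonneg_left hp₁ ha0
        have := mul_le_mul_of_nonneg_left hp₂ hb0
        nlinarith
      have h2 : 0 ≤ lam * (ε t ⬝ᵥ ε t) := mul_nonneg hlam0 hs0
      calc E^2 * ((ζ t ⬝ᵥ ζ t) * (ε t ⬝ᵥ (Kp * Sp).mulVec (ε t))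
            + (ξ t ⬝ᵥ ξ t) * (ε t ⬝ᵥ Γ.mulVec (ε t)))
          ≤ E^2 * (((ζ t ⬝ᵥ ζ t) + (ξ t ⬝ᵥ ξ t)) * (lam * (ε t ⬝ᵥ ε t))) :=
            mul_le_mul_of_nonneg_left h1 (by positivity)
        _ = (E * ((ζ t ⬝ᵥ ζ t) + (ξ t ⬝ᵥ ξ t))) * (E * (lam * (ε t ⬝ᵥ ε t))) := by ring
        _ ≤ 1 * (E * (lam * (ε t ⬝ᵥ ε t))) :=
            mul_le_mul_of_nonneg_right hEab (by positivity)
        _ = lam * (E * (ε t ⬝ᵥ ε t)) := by ring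
    nlinarith [hkey]
  -- V is nonnegative
  have hVnn : ∀ t, 0 ≤ V t := by
    intro t
    apply add_nonneg
    · exact Finset.sum_nonneg fun k _ =>
        le_trans (mul_nonneg hc₁.le (hdnn _)) (hlow₁ (θv t k))
    · exact Finset.sum_nonneg fun j _ =>
        le_trans (mul_nonneg hc₂.le (hdnn _)) (hlow₂ (ψv t j))
  have h2lam : 0 < 2 - lam := by linarith
  have hfnn : ∀ t, 0 ≤ (m t ^ 2)⁻¹ * (ε t ⬝ᵥ ε t) := fun t =>
    mul_nonneg (inv_pos.mpr (hmpos t)).le (hdnn _)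
  have hVmono : ∀ t, V (t+1) ≤ V t := by
    intro t
    have h1 := hstep t
    have h2 : 0 ≤ (2 - lam) * ((m t ^ 2)⁻¹ * (ε t ⬝ᵥ ε t)) :=
      mul_nonneg h2lam.le (hfnn t)
    exact h1.trans (sub_le_self _ h2)
  have hVle : ∀ t, V t ≤ V 0 := by
    intro t
    induction t with
    | zero => exact le_refl _
    | succ n ih => exact le_trans (hVmono n) ih
  -- the normalized error in dot-product terms
  have hfeq : ∀ t, (∑ j, ε t j * ε t j) / m t ^ 2 = (m t ^ 2)⁻¹ * (ε t ⬝ᵥ ε t) := by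
    intro t
    rw [div_eq_mul_inv, mul_comm]
    rfl
  -- pointwise bound on the normalized error
  have hfbd : ∀ t, (m t ^ 2)⁻¹ * (ε t ⬝ᵥ ε t) ≤ V 0 / (2 - lam) := by
    intro t
    rw [le_div_iff₀ h2lam]
    calc (m t ^ 2)⁻¹ * (ε t ⬝ᵥ ε t) * (2 - lam)
        = (2 - lam) * ((m t ^ 2)⁻¹ * (ε t ⬝ᵥ ε t)) := by ring
      _ ≤ V t - V (t+1) := le_sub_comm.mp (hstep t)
      _ ≤ V 0 - 0 := sub_le_sub (hVle t) (hVnn (t+1))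
      _ = V 0 := sub_zero _
  -- square summability
  have hsum : Summable (fun t => (∑ j, ε t j * ε t j) / m t ^ 2) := by
    apply summable_of_sum_range_le (c := V 0 / (2 - lam))
    · intro t; rw [hfeq t]; exact hfnn t
    · intro n
      rw [le_div_iff₀ h2lam]
      have hpart : ∀ n : ℕ, (∑ i ∈ Finset.range n, (∑ j, ε i j * ε i j) / m i ^ 2) * (2 - lam)
          ≤ V 0 - V n := by
        intro n
        induction n with
        | zero => simp
        | succ k ih =>
          rw [Finset.sum_range_succ, add_mul, hfeq k]
          calc (∑ i ∈ Finset.range k, (∑ j, ε i j * ε i j) / m i ^ 2) * (2 - lam)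
                + (m k ^ 2)⁻¹ * (ε k ⬝ᵥ ε k) * (2 - lam)
              ≤ (V 0 - V k) + (V k - V (k+1)) := by
                refine add_le_add ih ?_
                calc (m k ^ 2)⁻¹ * (ε k ⬝ᵥ ε k) * (2 - lam)
                    = (2 - lam) * ((m k ^ 2)⁻¹ * (ε k ⬝ᵥ ε k)) := by ring
                  _ ≤ V k - V (k+1) := le_sub_comm.mp (hstep k)
            _ = V 0 - V (k+1) := by ring
      exact (hpart n).trans (sub_le_self _ (hVnn n))
  refine ⟨?_, ?_, hsum, ?_⟩
  -- boundedness of Θ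
  · refine ⟨Real.sqrt (2 * (V 0) / c₁ + 2 * ∑ i, ∑ j, (Θs i j)^2), fun t => ?_⟩
    apply Real.sqrt_le_sqrt
    have hθb : ∑ k, (θv t k ⬝ᵥ θv t k) ≤ V 0 / c₁ := by
      rw [le_div_iff₀ hc₁]
      have h1 : c₁ * ∑ k, (θv t k ⬝ᵥ θv t k) ≤ ∑ k, θv t k ⬝ᵥ M₁.mulVec (θv t k) := by
        rw [Finset.mul_sum]
        exact Finset.sum_le_sum fun k _ => hlow₁ (θv t k)
      have h2 : ∑ k, θv t k ⬝ᵥ M₁.mulVec (θv t k) ≤ V t := by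
        have hx := Finset.sum_nonneg fun j (_ : j ∈ Finset.univ) =>
          le_trans (mul_nonneg hc₂.le (hdnn (ψv t j))) (hlow₂ (ψv t j))
        have hVdef : V t = (∑ k, θv t k ⬝ᵥ M₁.mulVec (θv t k))
            + ∑ j, ψv t j ⬝ᵥ (Γ⁻¹).mulVec (ψv t j) := rfl
        rw [hVdef]
        linarith
      calc (∑ k, (θv t k ⬝ᵥ θv t k)) * c₁ = c₁ * ∑ k, (θv t k ⬝ᵥ θv t k) := by ring
        _ ≤ V t := le_trans h1 h2
        _ ≤ V 0 := hVle t
    have hθb' : ∑ i, ∑ j, (θv t i j)^2 ≤ V 0 / c₁ := by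
      calc ∑ i, ∑ j, (θv t i j)^2 = ∑ k, (θv t k ⬝ᵥ θv t k) := by
            apply Finset.sum_congr rfl; intro k _
            simp [dotProduct, pow_two]
        _ ≤ V 0 / c₁ := hθb
    calc ∑ i, ∑ j, (Θ t i j)^2
        ≤ ∑ i, ∑ j, (2 * (θv t i j)^2 + 2 * (Θs i j)^2) := by
          apply Finset.sum_le_sum; intro i _
          apply Finset.sum_le_sum; intro j _
          have hrw : Θ t i j = θv t i j + Θs i j := by simp [hθv]
          rw [hrw]; nlinarith [sq_nonneg (θv t i j - Θs i j)]
      _ = 2 * (∑ i, ∑ j, (θv t i j)^2) + 2 * ∑ i, ∑ j, (Θs i j)^2 := by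
          simp [Finset.sum_add_distrib, Finset.mul_sum]
      _ ≤ 2 * (V 0 / c₁) + 2 * ∑ i, ∑ j, (Θs i j)^2 := by
          linarith
      _ = 2 * (V 0) / c₁ + 2 * ∑ i, ∑ j, (Θs i j)^2 := by ring
  -- boundedness of Ψ
  · refine ⟨Real.sqrt (2 * (V 0) / c₂ + 2 * ∑ i, ∑ j, (Kp i j)^2), fun t => ?_⟩
    apply Real.sqrt_le_sqrt
    have hψb : ∑ j, (ψv t j ⬝ᵥ ψv t j) ≤ V 0 / c₂ := by
      rw [le_div_iff₀ hc₂]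
      have h1 : c₂ * ∑ j, (ψv t j ⬝ᵥ ψv t j) ≤ ∑ j, ψv t j ⬝ᵥ (Γ⁻¹).mulVec (ψv t j) := by
        rw [Finset.mul_sum]
        exact Finset.sum_le_sum fun j _ => hlow₂ (ψv t j)
      have h2 : ∑ j, ψv t j ⬝ᵥ (Γ⁻¹).mulVec (ψv t j) ≤ V t := by
        have hx := Finset.sum_nonneg fun k (_ : k ∈ Finset.univ) =>
          le_trans (mul_nonneg hc₁.le (hdnn (θv t k))) (hlow₁ (θv t k))
        have hVdef : V t = (∑ k, θv t k ⬝ᵥ M₁.mulVec (θv t k))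
            + ∑ j, ψv t j ⬝ᵥ (Γ⁻¹).mulVec (ψv t j) := rfl
        rw [hVdef]
        linarith
      calc (∑ j, (ψv t j ⬝ᵥ ψv t j)) * c₂ = c₂ * ∑ j, (ψv t j ⬝ᵥ ψv t j) := by ring
        _ ≤ V t := le_trans h1 h2
        _ ≤ V 0 := hVle t
    have hψb' : ∑ i, ∑ j, (ψv t j i)^2 ≤ V 0 / c₂ := by
      calc ∑ i, ∑ j, (ψv t j i)^2 = ∑ j, (ψv t j ⬝ᵥ ψv t j) := by
            rw [Finset.sum_comm]
            apply Finset.sum_congr rfl; intro j _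
            simp [dotProduct, pow_two]
        _ ≤ V 0 / c₂ := hψb
    calc ∑ i, ∑ j, (Ψ t i j)^2
        ≤ ∑ i, ∑ j, (2 * (ψv t j i)^2 + 2 * (Kp i j)^2) := by
          apply Finset.sum_le_sum; intro i _
          apply Finset.sum_le_sum; intro j _
          have hrw : Ψ t i j = ψv t j i + Kp i j := by simp [hψv]
          rw [hrw]; nlinarith [sq_nonneg (ψv t j i - Kp i j)]
      _ = 2 * (∑ i, ∑ j, (ψv t j i)^2) + 2 * ∑ i, ∑ j, (Kp i j)^2 := by
          simp [Finset.sum_add_distrib, Finset.mul_sum]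
      _ ≤ 2 * (V 0 / c₂) + 2 * ∑ i, ∑ j, (Kp i j)^2 := by
          linarith
      _ = 2 * (V 0) / c₂ + 2 * ∑ i, ∑ j, (Kp i j)^2 := by ring
  -- boundedness of the normalized error
  · refine ⟨Real.sqrt (V 0 / (2 - lam)), fun t => ?_⟩
    have hBnn : 0 ≤ V 0 / (2 - lam) := div_nonneg (hVnn 0) h2lam.le
    have hdiv : 0 ≤ Real.sqrt (∑ j, ε t j * ε t j) / m t :=
      div_nonneg (Real.sqrt_nonneg _) (hmppos t).le
    rw [Real.le_sqrt hdiv hBnn]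
    have hsq : (Real.sqrt (∑ j, ε t j * ε t j) / m t)^2 = (∑ j, ε t j * ε t j) / m t ^ 2 := by
      rw [div_pow, Real.sq_sqrt (Finset.sum_nonneg fun j _ => mul_self_nonneg _)]
    rw [hsq, hfeq t]
    exact hfbd t
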